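/- Let R be a Dedekind domain, M a finitely generated projective R-module, and T ∈ End_R(M) an endomorphism that is an s-th power in End_R(M) for arbitrarily large positive integers s. Then M = ker T ⊕ im T and the restriction of T to im T is an automorphism. -/

import Mathlib

open Submodule UniqueFactorizationMonoid

section aux

variable {R : Type*} [CommRing R] [IsDomain R] [IsDedekindDomain R]

private lemma card_nf_le {I J : Ideal R} (hI : I ≠ ⊥) (hIJ : I ≤ J) :
    Multiset.card (normalizedFactors J) ≤ Multiset.card (normalizedFactors I) := by
  have hJ : J ≠ ⊥ := fun h => hI (le_bot_iff.mp (h ▸ hIJ))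
  exact Multiset.card_le_card <|
    (dvd_iff_normalizedFactors_le_normalizedFactors hJ hI).mp (Ideal.dvd_iff_le.mpr hIJ)

private lemma card_nf_lt {I J : Ideal R} (hI : I ≠ ⊥) (hIJ : I < J) :
    Multiset.card (normalizedFactors J) < Multiset.card (normalizedFactors I) := by
  have hJ : J ≠ ⊥ := fun h => hI (le_bot_iff.mp (h ▸ hIJ.le))
  have h1 : normalizedFactors J ≤ normalizedFactors I :=
    (dvd_iff_normalizedFactors_le_normalizedFactors hJ hI).mp (Ideal.dvd_iff_le.mpr hIJ.le)
  refine lt_of_le_of_ne (Multiset.card_le_card h1) (fun hcard => hIJ.ne ?_)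
  have heq : normalizedFactors J = normalizedFactors I :=
    Multiset.eq_of_le_of_card_le h1 (le_of_eq hcard.symm)
  have hd1 : I ∣ J :=
    (dvd_iff_normalizedFactors_le_normalizedFactors hI hJ).mpr (le_of_eq heq.symm)
  exact associated_iff_eq.mp (associated_of_dvd_dvd hd1 (Ideal.dvd_iff_le.mpr hIJ.le))

variable {M : Type*} [AddCommGroup M] [Module R M]

/-- A length-like invariant: sum of factor-counts of successive colon ideals. -/
private noncomputable def phi : List M → Submodule R M → ℕ
  | [], _ => 0
  | x :: t, C =>
      Multiset.card (normalizedFactors (C.colon (span R {x}))) + phi t (C ⊔ span R {x})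

private lemma step_lemma {C C' : Submodule R M} {x : M}
    (h1 : C ≤ C') (h2 : C ⊔ span R {x} = C' ⊔ span R {x})
    (h3 : C.colon (span R {x}) = C'.colon (span R {x})) : C' ≤ C := by
  intro y hy
  have hmem : y ∈ C ⊔ span R {x} := h2 ▸ mem_sup_left hy
  obtain ⟨c, hc, w, hw, hsum⟩ := mem_sup.mp hmem
  obtain ⟨a, rfl⟩ := mem_span_singleton.mp hw
  have hax : a • x ∈ C' := by
    have hsub : (c + a • x) - c ∈ C' := sub_mem (hsum ▸ hy) (h1 hc)
    rwa [add_sub_cancel_left] at hsub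
  have ha : a ∈ C'.colon (span R {x}) := mem_colon_span_singleton.mpr hax
  rw [← h3] at ha
  have hax' : a • x ∈ C := mem_colon_span_singleton.mp ha
  rw [← hsum]
  exact add_mem hc hax'

private lemma colon_ne_bot {r : R} (hr : r ≠ 0) {C D : Submodule R M} {x : M}
    (hle : C ≤ D) (hrC : ∀ y : M, r • y ∈ C) : D.colon (span R {x}) ≠ ⊥ := by
  intro hbot
  have hmem : r ∈ D.colon (span R {x}) := mem_colon_span_singleton.mpr (hle (hrC x))
  rw [hbot] at hmem
  exact hr (by simpa using hmem)

private lemma phi_antitone {r : R} (hr : r ≠ 0) :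
    ∀ (l : List M) (C C' : Submodule R M), C ≤ C' → (∀ y : M, r • y ∈ C) →
      phi l C' ≤ phi l C
  | [], _, _, _, _ => le_rfl
  | x :: t, C, C', hle, hrC => by
    have hcol : C.colon (span R {x}) ≤ C'.colon (span R {x}) :=
      colon_mono hle le_rfl
    have h1 : Multiset.card (normalizedFactors (C'.colon (span R {x}))) ≤
        Multiset.card (normalizedFactors (C.colon (span R {x}))) :=
      card_nf_le (colon_ne_bot hr le_rfl hrC) hcol
    have h2 := phi_antitone hr t (C ⊔ span R {x}) (C' ⊔ span R {x})
      (sup_le_sup_right hle _) (fun y => mem_sup_left (hrC y))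
    simpa [phi] using Nat.add_le_add h1 h2

private lemma phi_strict_anti {r : R} (hr : r ≠ 0) :
    ∀ (l : List M) (C C' : Submodule R M), C < C' → (∀ y : M, r • y ∈ C) →
      C ⊔ span R {y | y ∈ l} = C' ⊔ span R {y | y ∈ l} →
      phi l C' < phi l C
  | [], C, C', hlt, _, hsup => by
    exfalso
    apply hlt.ne
    have hempty : ({y | y ∈ ([] : List M)} : Set M) = ∅ := by ext y; simp
    rw [hempty, span_empty, sup_bot_eq, sup_bot_eq] at hsup
    exact hsup
  | x :: t, C, C', hlt, hrC, hsup => by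
    have hsetcons : ({y | y ∈ (x :: t : List M)} : Set M) = insert x {y | y ∈ t} := by
      ext y; simp
    have hspancons : span R ({y | y ∈ (x :: t : List M)} : Set M)
        = span R {x} ⊔ span R {y | y ∈ t} := by
      rw [hsetcons, span_insert]
    by_cases hcol : C.colon (span R {x}) = C'.colon (span R {x})
    · have hsx : C ⊔ span R {x} ≤ C' ⊔ span R {x} := sup_le_sup_right hlt.le _
      have hne : C ⊔ span R {x} ≠ C' ⊔ span R {x} := by
        intro he
        exact hlt.ne (le_antisymm hlt.le (step_lemma hlt.le he hcol))
      have ht : (C ⊔ span R {x}) ⊔ span R {y | y ∈ t}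
          = (C' ⊔ span R {x}) ⊔ span R {y | y ∈ t} := by
        rw [sup_assoc, sup_assoc, ← hspancons]
        exact hsup
      have hrec := phi_strict_anti hr t (C ⊔ span R {x}) (C' ⊔ span R {x})
        (lt_of_le_of_ne hsx hne) (fun y => mem_sup_left (hrC y)) ht
      simp only [phi, hcol]
      exact Nat.add_lt_add_left hrec _
    · have hcle : C.colon (span R {x}) < C'.colon (span R {x}) :=
        lt_of_le_of_ne (colon_mono hlt.le le_rfl) hcol
      have h1 : Multiset.card (normalizedFactors (C'.colon (span R {x}))) <
          Multiset.card (normalizedFactors (C.colon (span R {x}))) :=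
        card_nf_lt (colon_ne_bot hr le_rfl hrC) hcle
      have h2 := phi_antitone hr t (C ⊔ span R {x}) (C' ⊔ span R {x})
        (sup_le_sup_right hlt.le _) (fun y => mem_sup_left (hrC y))
      simp only [phi]
      omega

end aux

theorem stmt_17 (R : Type*) [CommRing R] [IsDomain R] [IsDedekindDomain R]
    (M : Type*) [AddCommGroup M] [Module R M] [Module.Finite R M] [Module.Projective R M]
    (T : M →ₗ[R] M)
    (h : {s : ℕ | 0 < s ∧ ∃ S : M →ₗ[R] M, S ^ s = T}.Infinite) :
    IsCompl (LinearMap.ker T) (LinearMap.range T) ∧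
      Set.BijOn T (LinearMap.range T : Set M) (LinearMap.range T : Set M) := by
  classical
  -- M is torsion-free
  have hnzd : ∀ (a : R) (x : M), a • x = 0 → a = 0 ∨ x = 0 := by
    obtain ⟨sec, hsec⟩ := Module.projective_def'.mp ‹Module.Projective R M›
    intro a x hax
    have h1 : a • sec x = 0 := by rw [← map_smul, hax, map_zero]
    rcases smul_eq_zero.mp h1 with h' | h'
    · exact Or.inl h'
    · right
      have hx := DFunLike.congr_fun hsec x
      simp only [LinearMap.coe_comp, Function.comp_apply, LinearMap.id_apply] at hx
      rw [← hx, h', map_zero]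
  haveI hNZSD : NoZeroSMulDivisors R M := ⟨fun {a x} hax => hnzd a x hax⟩
  set K := FractionRing R with hK
  set V := LocalizedModule (nonZeroDivisors R) M with hV
  let ι : M →ₗ[R] V := LocalizedModule.mkLinearMap (nonZeroDivisors R) M
  haveI : Module.Finite K V :=
    Module.Finite.of_isLocalizedModule (nonZeroDivisors R) ι
  have hι : Function.Injective ι := by
    intro x y hxy
    have hz : ι (x - y) = 0 := by rw [map_sub, hxy, sub_self]
    obtain ⟨c, hc⟩ := (IsLocalizedModule.eq_zero_iff (nonZeroDivisors R) ι).mp hz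
    have hc' : (c : R) • (x - y) = 0 := hc
    rcases hnzd _ _ hc' with h' | h'
    · exact absurd h' (nonZeroDivisors.coe_ne_zero c)
    · exact sub_eq_zero.mp h'
  let ext : (M →ₗ[R] M) → (V →ₗ[K] V) := fun S =>
    LinearMap.extendScalarsOfIsLocalization (nonZeroDivisors R) K
      ((IsLocalizedModule.map (nonZeroDivisors R) ι ι) S)
  have hext : ∀ (S : M →ₗ[R] M) (x : M), ext S (ι x) = ι (S x) := by
    intro S x
    exact IsLocalizedModule.map_apply (nonZeroDivisors R) ι ι S x
  have hpow : ∀ (S : M →ₗ[R] M) (k : ℕ) (x : M), ((ext S) ^ k) (ι x) = ι ((S ^ k) x) := by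
    intro S k
    induction k with
    | zero => intro x; simp
    | succ n ih =>
      intro x
      rw [pow_succ, pow_succ, Module.End.mul_apply, Module.End.mul_apply, hext, ih]
  -- kernel collapse via the generic fiber
  have kerpow : ∀ (f : V →ₗ[K] V) (a b : ℕ), Module.finrank K V ≤ a →
      ∀ v : V, (f ^ b) v = 0 → (f ^ a) v = 0 := by
    intro f a b ha v hv
    have h1 : v ∈ LinearMap.ker (f ^ Module.finrank K V) :=
      Module.End.ker_pow_le_ker_pow_finrank f b (LinearMap.mem_ker.mpr hv)
    have hsplit : f ^ a = f ^ (a - Module.finrank K V) * f ^ (Module.finrank K V) := by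
      rw [← pow_add]
      congr 1
      omega
    rw [hsplit, Module.End.mul_apply, LinearMap.mem_ker.mp h1, map_zero]
  have key : ∀ (S : M →ₗ[R] M) (a b : ℕ), Module.finrank K V ≤ a →
      ∀ x : M, (S ^ b) x = 0 → (S ^ a) x = 0 := by
    intro S a b ha x hx
    have h1 : ((ext S) ^ b) (ι x) = 0 := by rw [hpow, hx, map_zero]
    have h2 : ((ext S) ^ a) (ι x) = 0 := kerpow (ext S) a b ha (ι x) h1
    rw [hpow] at h2
    apply hι
    rw [h2, map_zero]
  -- a first large exponent
  obtain ⟨s₀, hs₀mem, hs₀⟩ := h.exists_gt (Module.finrank K V)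
  obtain ⟨hs₀pos, S₀, hS₀⟩ := hs₀mem
  have hkerTT : ∀ x : M, T (T x) = 0 → T x = 0 := by
    intro x hx
    have hb : (S₀ ^ (s₀ + s₀)) x = 0 := by
      rw [pow_add, Module.End.mul_apply, hS₀, hx]
    have hres := key S₀ s₀ (s₀ + s₀) hs₀.le x hb
    rwa [hS₀] at hres
  have hdisj : Disjoint (LinearMap.ker T) (LinearMap.range T) := by
    rw [disjoint_def]
    rintro a hker ⟨y, rfl⟩
    exact hkerTT y (LinearMap.mem_ker.mp hker)
  -- Fitting decomposition on V
  set F : V →ₗ[K] V := (ext S₀) ^ s₀ with hFdef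
  have hFdisj : LinearMap.ker F ⊓ LinearMap.range F = ⊥ := by
    rw [eq_bot_iff]
    rintro v ⟨hk, w, rfl⟩
    have h1 : ((ext S₀) ^ (s₀ + s₀)) w = 0 := by
      rw [pow_add, Module.End.mul_apply]
      exact LinearMap.mem_ker.mp hk
    have h2 : F w = 0 := kerpow (ext S₀) s₀ (s₀ + s₀) hs₀.le w h1
    simpa using h2
  have hFco : LinearMap.ker F ⊔ LinearMap.range F = ⊤ := by
    apply Submodule.eq_top_of_finrank_eq
    have h1 := Submodule.finrank_sup_add_finrank_inf_eq (LinearMap.ker F) (LinearMap.range F)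
    rw [hFdisj, finrank_bot, add_zero] at h1
    have h2 := LinearMap.finrank_range_add_finrank_ker F
    omega
  -- every element has a nonzerodivisor multiple in ker T ⊔ range T
  have claimB : ∀ x : M, ∃ c ∈ nonZeroDivisors R,
      c • x ∈ LinearMap.ker T ⊔ LinearMap.range T := by
    intro x
    have hx : ι x ∈ LinearMap.ker F ⊔ LinearMap.range F := hFco ▸ Submodule.mem_top
    obtain ⟨u, hu, fw, ⟨w, rfl⟩, hsum⟩ := mem_sup.mp hx
    obtain ⟨⟨mu, cu⟩, hcu⟩ := IsLocalizedModule.surj (nonZeroDivisors R) ι u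
    obtain ⟨⟨mw, cw⟩, hcw⟩ := IsLocalizedModule.surj (nonZeroDivisors R) ι w
    have hcu' : (cu : R) • u = ι mu := hcu
    have hcw' : (cw : R) • w = ι mw := hcw
    refine ⟨(cu : R) * (cw : R), mul_mem cu.2 cw.2, ?_⟩
    -- the kernel part
    have hmu : T ((cw : R) • mu) = 0 := by
      apply hι
      rw [map_zero]
      have e1 : ι ((cw : R) • mu) = ((cw : R) * (cu : R)) • u := by
        rw [map_smul, ← hcu', smul_smul]
      have e2 : ι (T ((cw : R) • mu)) = F (ι ((cw : R) • mu)) := by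
        rw [hFdef, hpow, hS₀]
      rw [e2, e1, LinearMap.map_smul_of_tower, LinearMap.mem_ker.mp hu, smul_zero]
    -- the main identity
    have e3 : ι (((cu : R) * (cw : R)) • x)
        = ι ((cw : R) • mu + T ((cu : R) • mw)) := by
      rw [map_smul, ← hsum, smul_add, map_add]
      congr 1
      · rw [map_smul, ← hcu', smul_smul, mul_comm]
      · rw [← LinearMap.map_smul_of_tower, mul_smul, hcw', ← map_smul, hFdef, hpow, hS₀]
    have e4 := hι e3
    rw [e4]
    exact add_mem (mem_sup_left (LinearMap.mem_ker.mpr hmu))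
      (mem_sup_right (LinearMap.mem_range_self T _))
  -- produce a global nonzero multiplier r with r • M ⊆ ker T ⊔ range T
  obtain ⟨n, gen, hgen⟩ := Module.Finite.exists_fin (R := R) (M := M)
  choose c hc hcN using claimB
  set r : R := ∏ i : Fin n, c (gen i) with hrdef
  have hrmem : r ∈ nonZeroDivisors R := prod_mem fun i _ => hc (gen i)
  have hrne : r ≠ 0 := nonZeroDivisors.ne_zero hrmem
  have hrC : ∀ y : M, r • y ∈ LinearMap.ker T ⊔ LinearMap.range T := by
    have hsub : span R (Set.range gen) ≤
        (LinearMap.ker T ⊔ LinearMap.range T).comap (LinearMap.lsmul R M r) := by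
      rw [span_le]
      rintro _ ⟨i, rfl⟩
      simp only [SetLike.mem_coe, mem_comap, LinearMap.lsmul_apply]
      have hsplit : r = (∏ j ∈ Finset.univ.erase i, c (gen j)) * c (gen i) := by
        rw [Finset.prod_erase_mul _ _ (Finset.mem_univ i)]
      rw [hsplit, mul_smul]
      exact Submodule.smul_mem _ _ (hcN (gen i))
    intro y
    have hy : y ∈ span R (Set.range gen) := by rw [hgen]; trivial
    exact hsub hy
  -- generators as a list
  set l : List M := List.ofFn gen with hldef
  have hspan : span R {y | y ∈ l} = ⊤ := by
    have : ({y | y ∈ l} : Set M) = Set.range gen := by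
      ext y; simp [hldef, List.mem_ofFn]
    rw [this, hgen]
  -- the big exponent
  obtain ⟨s, hsmem, hs⟩ := h.exists_gt
    (max (Module.finrank K V) (phi l (LinearMap.ker T ⊔ LinearMap.range T)))
  obtain ⟨hspos, S, hST⟩ := hsmem
  have hsd : Module.finrank K V ≤ s := le_of_lt (lt_of_le_of_lt (le_max_left _ _) hs)
  have hsphi : phi l (LinearMap.ker T ⊔ LinearMap.range T) < s :=
    lt_of_le_of_lt (le_max_right _ _) hs
  -- the chain
  set C : ℕ → Submodule R M := fun k => LinearMap.ker T ⊔ LinearMap.range (S ^ k) with hCdef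
  have hSker : ∀ x : M, T x = 0 → T (S x) = 0 := by
    intro x hx
    have hcomm : T ∘ₗ S = S ∘ₗ T := by
      rw [← Module.End.mul_eq_comp, ← Module.End.mul_eq_comp, ← hST, ← pow_succ, ← pow_succ']
    have := DFunLike.congr_fun hcomm x
    simp only [LinearMap.coe_comp, Function.comp_apply] at this
    rw [this, hx, map_zero]
  have hSkerpow : ∀ (k : ℕ) (x : M), T x = 0 → T ((S ^ k) x) = 0 := by
    intro k
    induction k with
    | zero => intro x hx; simpa using hx
    | succ m ih =>
      intro x hx
      rw [pow_succ', Module.End.mul_apply]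
      exact hSker _ (ih x hx)
  have hCanti : ∀ k, C (k + 1) ≤ C k := by
    intro k
    apply sup_le_sup_left
    rw [pow_succ, Module.End.mul_eq_comp]
    exact LinearMap.range_comp_le_range S (S ^ k)
  have hCanti' : Antitone C := antitone_nat_of_succ_le hCanti
  have hCs : C s = LinearMap.ker T ⊔ LinearMap.range T := by rw [hCdef]; simp only [hST]
  have hNtop : LinearMap.ker T ⊔ LinearMap.range T = ⊤ := by
    by_cases hstall : ∃ k, k < s ∧ C k ≤ C (k + 1)
    · obtain ⟨k, hks, hstab⟩ := hstall
      -- first: C 1 = ⊤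
      have hC1 : ∀ x : M, x ∈ C 1 := by
        intro x
        have h1 : (S ^ k) x ∈ C (k + 1) :=
          hstab (mem_sup_right (LinearMap.mem_range_self _ x))
        obtain ⟨κ, hκ, w, ⟨z, rfl⟩, hsum⟩ := mem_sup.mp h1
        have e : (S ^ (k + 1)) z = (S ^ k) (S z) := by
          rw [pow_succ, Module.End.mul_apply]
        have hκ' : (S ^ k) (x - S z) = κ := by
          rw [map_sub, ← e, ← hsum]
          abel
        have h2 : (S ^ (s + k)) (x - S z) = 0 := by
          rw [pow_add, Module.End.mul_apply, hκ', hST]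
          exact LinearMap.mem_ker.mp hκ
        have h3 : T (x - S z) = 0 := by
          rw [← hST]
          exact key S s (s + k) hsd _ h2
        have hxd : x = (x - S z) + S z := by abel
        rw [hxd]
        exact add_mem (mem_sup_left (LinearMap.mem_ker.mpr h3))
          (mem_sup_right ⟨z, by rw [pow_one]⟩)
      have hCtop : ∀ j, ∀ x : M, x ∈ C j := by
        intro j
        induction j with
        | zero =>
          intro x
          exact mem_sup_right ⟨x, by rw [pow_zero, Module.End.one_apply]⟩
        | succ m ihm =>
          intro x
          obtain ⟨κ, hκ, w, ⟨y, rfl⟩, hsum⟩ := mem_sup.mp (ihm x)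
          obtain ⟨κ', hκ', w', ⟨z, rfl⟩, hsum'⟩ := mem_sup.mp (hC1 y)
          have hx : x = (κ + (S ^ m) κ') + (S ^ (m + 1)) z := by
            rw [← hsum, ← hsum', map_add]
            have e : (S ^ (m + 1)) z = (S ^ m) ((S ^ 1) z) := by
              rw [← Module.End.mul_apply, ← pow_add]
            rw [e]
            abel
          rw [hx]
          exact add_mem (mem_sup_left (add_mem hκ (LinearMap.mem_ker.mpr
              (hSkerpow m κ' (LinearMap.mem_ker.mp hκ')))))
            (mem_sup_right (LinearMap.mem_range_self _ z))
      rw [← hCs]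
      exact eq_top_iff.mpr fun x _ => hCtop s x
    · push_neg at hstall
      exfalso
      have hstrict : ∀ k, k < s → C (k + 1) < C k := fun k hk =>
        lt_of_le_of_ne (hCanti k) (fun he => (hstall k hk) (le_of_eq he.symm))
      have hinc : ∀ k, k ≤ s → k ≤ phi l (C k) := by
        intro k
        induction k with
        | zero => intro _; exact Nat.zero_le _
        | succ m ih =>
          intro hms
          have h1 : m ≤ phi l (C m) := ih (Nat.le_of_succ_le hms)
          have hrCm : ∀ y : M, r • y ∈ C (m + 1) := by
            intro y
            have : C s ≤ C (m + 1) := hCanti' hms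
            exact this (hCs ▸ hrC y)
          have hsupeq : C (m + 1) ⊔ span R {y | y ∈ l} = C m ⊔ span R {y | y ∈ l} := by
            rw [hspan, sup_top_eq, sup_top_eq]
          have h2 : phi l (C m) < phi l (C (m + 1)) :=
            phi_strict_anti hrne l (C (m + 1)) (C m) (hstrict m hms) hrCm hsupeq
          omega
      have hfin := hinc s le_rfl
      rw [hCs] at hfin
      omega
  refine ⟨⟨hdisj, codisjoint_iff.mpr hNtop⟩, ?_, ?_, ?_⟩
  · intro x _
    exact LinearMap.mem_range_self T x
  · intro x hx y hy hxy
    have hmem : x - y ∈ LinearMap.ker T ⊓ LinearMap.range T :=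
      ⟨LinearMap.mem_ker.mpr (by rw [map_sub, hxy, sub_self]), sub_mem hx hy⟩
    rw [hdisj.eq_bot] at hmem
    exact sub_eq_zero.mp (by simpa using hmem)
  · rintro y ⟨x, rfl⟩
    have hx : x ∈ LinearMap.ker T ⊔ LinearMap.range T := by rw [hNtop]; trivial
    obtain ⟨κ, hκ, w, ⟨z, rfl⟩, hsum⟩ := mem_sup.mp hx
    refine ⟨T z, LinearMap.mem_range_self T z, ?_⟩
    rw [← hsum, map_add, LinearMap.mem_ker.mp hκ, zero_add]
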